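/- With abelian recollement gluing data, for every object N of 𝒜_U the intermediate extension j_!* N admits no nonzero quotient supported on Z: if j_!* N ↠ Q is an epimorphism in 𝒜 with j^* Q ≅ 0, then Q ≅ 0. -/

import Mathlib

/-!
Abelian recollement gluing data, abstracting the open immersion `j : U → S`:
abelian categories `A` and `B` (the latter playing the role of `𝒜_U`), an exact
functor `jstar : A ⥤ B` with a left adjoint `jlow` (`j_!`) and a right adjoint
`jup` (`j_*`), such that the unit of `j_! ⊣ j^*` and the counit of `j^* ⊣ j_*`
are isomorphisms.  For `N : B`, `cmap N : j_! N ⟶ j_* N` is the unique morphism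
whose image under `j^*` is `id_N` (under the canonical identifications), and the
intermediate extension `j_!* N` is its image.  "`X` is supported on `Z`" means
`j^* X ≅ 0`, i.e. `IsZero (jstar.obj X)`.
-/

open CategoryTheory CategoryTheory.Limits

variable {A : Type*} [Category A] [Abelian A]
variable {B : Type*} [Category B] [Abelian B]

/-- The canonical morphism `c_N : j_! N ⟶ j_* N`, corresponding under the
adjunction `j_! ⊣ j^*` to the inverse of the counit `j^* j_* N ≅ N`. -/
noncomputable def cmap (jstar : A ⥤ B) (jlow jup : B ⥤ A)
    (adj1 : jlow ⊣ jstar) (adj2 : jstar ⊣ jup) [IsIso adj2.counit] (N : B) :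
    jlow.obj N ⟶ jup.obj N :=
  (adj1.homEquiv N (jup.obj N)).symm (inv (adj2.counit.app N))

/-- The intermediate extension `j_!* N := Im (c_N : j_! N ⟶ j_* N)`. -/
noncomputable def interExt (jstar : A ⥤ B) (jlow jup : B ⥤ A)
    (adj1 : jlow ⊣ jstar) (adj2 : jstar ⊣ jup) [IsIso adj2.counit] (N : B) : A :=
  image (cmap jstar jlow jup adj1 adj2 N)

/-- the intermediate extension `j_!* N` admits no nonzero quotient
supported on `Z`: if `j_!* N ↠ Q` is an epimorphism with `j^* Q ≅ 0`, then
`Q ≅ 0`. -/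
theorem interExt_no_quotient_supported
    (jstar : A ⥤ B) (jlow jup : B ⥤ A)
    (adj1 : jlow ⊣ jstar) (adj2 : jstar ⊣ jup)
    [IsIso adj1.unit] [IsIso adj2.counit]
    [PreservesFiniteLimits jstar] [PreservesFiniteColimits jstar]
    (N : B) (Q : A) (g : interExt jstar jlow jup adj1 adj2 N ⟶ Q) [Epi g]
    (hQ : IsZero (jstar.obj Q)) :
    IsZero Q := by
  set f : jlow.obj N ⟶ Q := factorThruImage (cmap jstar jlow jup adj1 adj2 N) ≫ g with hf
  have hepi : Epi f := epi_comp' inferInstance (by assumption)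
  have hzero : f = 0 := by
    apply (adj1.homEquiv N Q).injective
    exact hQ.eq_of_tgt _ _
  rw [IsZero.iff_id_eq_zero]
  rw [← cancel_epi f, hzero]; simp
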